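/- Let Q : ℝ^n → ℝ be given by Q(β) = (β − c)ᵀ A (β − c) + d for a positive semidefinite symmetric matrix A, c ∈ ℝ^n, d ∈ ℝ, and let P : ℝ^n → ℝ be convex. If β* minimizes F = Q + P over ℝ^n, then for every β ∈ ℝ^n, F(β) − F(β*) ≥ (β − β*)ᵀ A (β − β*). -/

import Mathlib

/-- If `β*` minimizes `F = Q + P` with `Q(β) = (β-c)ᵀA(β-c) + d` (A psd symmetric)
and `P` convex, then `F(β) - F(β*) ≥ (β-β*)ᵀA(β-β*)` for all `β`. -/
theorem stmt2 {n : ℕ} (A : Matrix (Fin n) (Fin n) ℝ) (hA : A.PosSemidef)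
    (c : Fin n → ℝ) (d : ℝ) (Q P : (Fin n → ℝ) → ℝ)
    (hQ : ∀ β, Q β = dotProduct (β - c) (A.mulVec (β - c)) + d)
    (hP : ConvexOn ℝ Set.univ P)
    (βs : Fin n → ℝ) (hmin : ∀ β, Q βs + P βs ≤ Q β + P β) :
    ∀ β : Fin n → ℝ,
      dotProduct (β - βs) (A.mulVec (β - βs)) ≤ (Q β + P β) - (Q βs + P βs) := by
  intro β
  set v : Fin n → ℝ := β - βs with hv
  set x : Fin n → ℝ := βs - c with hx
  have hAT : A.transpose = A := by
    have := hA.1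
    simpa [Matrix.IsHermitian] using this
  have hsymm : ∀ u w : Fin n → ℝ,
      dotProduct u (A.mulVec w) = dotProduct w (A.mulVec u) := by
    intro u w
    rw [Matrix.dotProduct_mulVec]
    nth_rewrite 1 [← hAT]
    rw [Matrix.vecMul_transpose, dotProduct_comm]
  have hexp : ∀ t : ℝ, dotProduct (x + t • v) (A.mulVec (x + t • v)) =
      dotProduct x (A.mulVec x) + 2*t*dotProduct x (A.mulVec v)
        + t^2 * dotProduct v (A.mulVec v) := by
    intro t
    simp only [Matrix.mulVec_add, Matrix.mulVec_smul, dotProduct_add,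
      add_dotProduct, smul_dotProduct, dotProduct_smul,
      smul_eq_mul, hsymm v x]
    ring
  have hkey : ∀ t : ℝ, 0 < t → t ≤ 1 →
      0 ≤ 2*dotProduct x (A.mulVec v) + t * dotProduct v (A.mulVec v)
        + (P β - P βs) := by
    intro t ht ht1
    have hm := hmin (βs + t • v)
    have heq : βs + t • v = (1 - t) • βs + t • β := by
      funext i
      simp [hv, Pi.sub_apply]
      ring
    have hPm : P (βs + t • v) ≤ (1 - t) * P βs + t * P β := by
      rw [heq]
      exact hP.2 (Set.mem_univ βs) (Set.mem_univ β) (by linarith) (le_of_lt ht) (by ring)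
    have hsub : βs + t • v - c = x + t • v := by
      funext i; simp [hx]; ring
    have hQt : Q (βs + t • v) = dotProduct x (A.mulVec x)
        + 2*t*dotProduct x (A.mulVec v)
        + t^2 * dotProduct v (A.mulVec v) + d := by
      rw [hQ, hsub, hexp]
    have hQs : Q βs = dotProduct x (A.mulVec x) + d := by
      rw [hQ, hx]
    rw [hQs, hQt] at hm
    have h2 : t * 0 ≤ t * (2*dotProduct x (A.mulVec v)
        + t * dotProduct v (A.mulVec v) + (P β - P βs)) := by nlinarith
    exact le_of_mul_le_mul_left h2 ht
  have hvAv : 0 ≤ dotProduct v (A.mulVec v) := by simpa using hA.dotProduct_mulVec_nonneg v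
  have hs : 0 ≤ 2*dotProduct x (A.mulVec v) + (P β - P βs) := by
    by_contra hneg
    push_neg at hneg
    set s := 2*dotProduct x (A.mulVec v) + (P β - P βs) with hsdef
    set b := dotProduct v (A.mulVec v) with hbdef
    set t := min 1 ((-s) / (2 * (b + 1))) with htdef
    have hbpos : (0:ℝ) < b + 1 := by linarith
    have htpos : 0 < t := by
      apply lt_min one_pos
      apply div_pos (by linarith) (by linarith)
    have ht1 : t ≤ 1 := min_le_left _ _
    have htb : t * (b + 1) ≤ -s / 2 := by
      have := min_le_right 1 ((-s) / (2 * (b + 1)))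
      calc t * (b + 1) ≤ ((-s) / (2 * (b + 1))) * (b + 1) := by
            apply mul_le_mul_of_nonneg_right this (le_of_lt hbpos)
        _ = -s / 2 := by field_simp
    have := hkey t htpos ht1
    nlinarith
  have hsubβ : β - c = x + v := by
    funext i; simp [hx, hv]
  have hQβ : Q β = dotProduct x (A.mulVec x)
      + 2*dotProduct x (A.mulVec v)
      + dotProduct v (A.mulVec v) + d := by
    rw [hQ, hsubβ]
    have := hexp 1
    simpa using this
  have hQs : Q βs = dotProduct x (A.mulVec x) + d := by rw [hQ, hx]
  rw [hQβ, hQs]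
  have : dotProduct (β - βs) (A.mulVec (β - βs)) =
      dotProduct v (A.mulVec v) := by rw [hv]
  rw [this]
  linarith
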